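/- Let 0 < α < 1 and β > 0, and let φ : ℝ → ℝ be a measurable function such that ∫_{−∞}^{+∞} (ϑ² + β) φ(ϑ)² dϑ < ∞. Then ( ∫_{−∞}^{+∞} |φ(ϑ)| · |ϑ|^{α − 1/2} dϑ )² ≤ (π / sin(απ)) · β^{α−1} · ∫_{−∞}^{+∞} (ϑ² + β) φ(ϑ)² dϑ. -/

import Mathlib

open Real MeasureTheory

section Aux
open Set

theorem beta_val (a : ℝ) (ha0 : 0 < a) (ha1 : a < 1) :
    ∫ t in Ioo (0:ℝ) 1, t ^ (a-1) * (1-t) ^ (-a) = π / Real.sin (π * a) := by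
  have hre1 : 0 < Complex.re (a : ℂ) := by simpa using ha0
  have hre2 : 0 < Complex.re (1 - (a : ℂ)) := by simp; linarith
  have h1 := Complex.Gamma_mul_Gamma_eq_betaIntegral hre1 hre2
  rw [show ((a:ℂ) + (1 - (a:ℂ))) = 1 by ring, Complex.Gamma_one, one_mul] at h1
  rw [Complex.Gamma_mul_Gamma_one_sub] at h1
  have h2 : Complex.betaIntegral a (1-a)
      = ((∫ t in (0:ℝ)..1, t ^ (a-1) * (1-t) ^ (-a) : ℝ) : ℂ) := by
    rw [Complex.betaIntegral, ← intervalIntegral.integral_ofReal]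
    apply intervalIntegral.integral_congr
    intro x hx
    rw [Set.uIcc_of_le zero_le_one] at hx
    show (x:ℂ) ^ ((a:ℂ) - 1) * ((1:ℂ) - (x:ℂ)) ^ ((1:ℂ) - (a:ℂ) - 1)
      = ((x ^ (a - 1) * (1 - x) ^ (-a) : ℝ) : ℂ)
    rw [show ((a:ℂ) - 1) = ((a - 1 : ℝ) : ℂ) by push_cast; ring,
      show ((1:ℂ) - (a:ℂ) - 1) = ((-a : ℝ) : ℂ) by push_cast; ring,
      show ((1:ℂ) - (x:ℂ)) = ((1 - x : ℝ) : ℂ) by push_cast; ring,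
      ← Complex.ofReal_cpow hx.1, ← Complex.ofReal_cpow (by linarith [hx.2])]
    push_cast
    ring
  rw [h2] at h1
  have h3 : (↑π / Complex.sin (↑π * ↑a) : ℂ) = ((π / Real.sin (π * a) : ℝ) : ℂ) := by
    push_cast [Complex.ofReal_sin]
    ring
  rw [h3] at h1
  have h4 := Complex.ofReal_inj.mp h1.symm
  rw [intervalIntegral.integral_of_le zero_le_one, integral_Ioc_eq_integral_Ioo] at h4
  exact h4

theorem beta_integrable (a : ℝ) (ha0 : 0 < a) (ha1 : a < 1) :
    IntegrableOn (fun t : ℝ => t ^ (a-1) * (1-t) ^ (-a)) (Ioo (0:ℝ) 1) := by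
  have hre1 : 0 < Complex.re (a : ℂ) := by simpa using ha0
  have hre2 : 0 < Complex.re (1 - (a : ℂ)) := by simp; linarith
  have h := Complex.betaIntegral_convergent hre1 hre2
  rw [intervalIntegrable_iff_integrableOn_Ioc_of_le zero_le_one] at h
  have h2 : IntegrableOn
      (fun x : ℝ => ((x:ℂ) ^ ((a:ℂ)-1) * (1-(x:ℂ)) ^ ((1:ℂ)-(a:ℂ)-1)).re) (Ioc 0 1) := h.re
  refine ((h2.mono_set Ioo_subset_Ioc_self).congr_fun (fun x hx => ?_) measurableSet_Ioo)

  beta_reduce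
  rw [show ((a:ℂ) - 1) = ((a - 1 : ℝ) : ℂ) by push_cast; ring,
    show ((1:ℂ) - (a:ℂ) - 1) = ((-a : ℝ) : ℂ) by push_cast; ring,
    show ((1:ℂ) - (x:ℂ)) = ((1 - x : ℝ) : ℂ) by push_cast; ring,
    ← Complex.ofReal_cpow hx.1.le, ← Complex.ofReal_cpow (by linarith [hx.2])]
  rw [← Complex.ofReal_mul, Complex.ofReal_re]

theorem subst_data : (fun t : ℝ => t / (1 - t)) '' (Ioo 0 1) = Ioi 0 := by
  ext y
  constructor
  · rintro ⟨t, ⟨ht0, ht1⟩, rfl⟩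
    exact div_pos ht0 (by linarith)
  · intro hy
    have hy0 : (0:ℝ) < y := hy
    refine ⟨y / (1 + y), ⟨div_pos hy0 (by linarith), (div_lt_one (by linarith)).2 (by linarith)⟩, ?_⟩
    field_simp; ring

theorem subst_deriv : ∀ t ∈ Ioo (0:ℝ) 1,
    HasDerivWithinAt (fun t : ℝ => t / (1 - t)) (((1-t)^2)⁻¹) (Ioo 0 1) t := by
  intro t ⟨ht0, ht1⟩
  have h : HasDerivAt (fun t : ℝ => t / (1 - t))
      ((1 * (1 - t) - t * (-1)) / (1 - t)^2) t :=
    (hasDerivAt_id t).div ((hasDerivAt_id t).const_sub 1) (by intro h; linarith [sub_eq_zero.mp h])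
  have e : (1 * (1 - t) - t * (-1)) / (1 - t)^2 = ((1-t)^2)⁻¹ := by field_simp; ring
  rw [e] at h
  exact h.hasDerivWithinAt

theorem subst_inj : InjOn (fun t : ℝ => t / (1 - t)) (Ioo 0 1) := by
  intro x ⟨hx0, hx1⟩ y ⟨hy0, hy1⟩ h
  simp only at h
  have hx : (1:ℝ) - x ≠ 0 := by intro h'; linarith [sub_eq_zero.mp h']
  have hy : (1:ℝ) - y ≠ 0 := by intro h'; linarith [sub_eq_zero.mp h']
  field_simp at h
  linarith

theorem subst_ptwise (a : ℝ) : ∀ t ∈ Ioo (0:ℝ) 1,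
    |((1-t)^2)⁻¹| • ((t / (1-t)) ^ (a-1) / (1 + t / (1-t))) = t ^ (a-1) * (1-t) ^ (-a) := by
  intro t ⟨ht0, ht1⟩
  have h1t : (0:ℝ) < 1 - t := by linarith
  have h1 : 1 + t / (1-t) = (1-t)⁻¹ := by field_simp; ring
  rw [h1, Real.div_rpow ht0.le h1t.le, smul_eq_mul, abs_of_pos (by positivity)]
  rw [show ((1-t:ℝ)^2)⁻¹ = (1-t)^(-2:ℝ) by
      rw [← Real.rpow_natCast (1-t) 2, ← Real.rpow_neg h1t.le]; norm_num,
    div_eq_mul_inv, div_eq_mul_inv, inv_inv, ← Real.rpow_neg h1t.le]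
  have e : (1-t) ^ (-a) = (1-t)^(-2:ℝ) * ((1-t) ^ (-(a-1)) * (1-t) ^ (1:ℝ)) := by
    rw [← Real.rpow_add h1t, ← Real.rpow_add h1t]; ring_nf
  rw [e, Real.rpow_one]; ring

theorem mellin_val (a : ℝ) (ha0 : 0 < a) (ha1 : a < 1) :
    ∫ x in Ioi (0:ℝ), x ^ (a-1) / (1 + x) = π / Real.sin (π * a) := by
  rw [← subst_data, integral_image_eq_integral_abs_deriv_smul measurableSet_Ioo subst_deriv
    subst_inj (fun x => x ^ (a-1) / (1 + x)),
    setIntegral_congr_fun measurableSet_Ioo (subst_ptwise a)]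
  exact beta_val a ha0 ha1

theorem mellin_integrable (a : ℝ) (ha0 : 0 < a) (ha1 : a < 1) :
    IntegrableOn (fun x : ℝ => x ^ (a-1) / (1 + x)) (Ioi (0:ℝ)) := by
  rw [← subst_data, integrableOn_image_iff_integrableOn_abs_deriv_smul measurableSet_Ioo
    subst_deriv subst_inj]
  exact (beta_integrable a ha0 ha1).congr_fun (fun t ht => (subst_ptwise a t ht).symm)
    measurableSet_Ioo

theorem sq_data (β : ℝ) (hβ : 0 < β) : (fun t : ℝ => t^2/β) '' (Ioi 0) = Ioi 0 := by
  ext y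
  constructor
  · rintro ⟨t, ht, rfl⟩
    exact div_pos (pow_pos ht 2) hβ
  · intro hy
    have hy0 : (0:ℝ) < y := hy
    refine ⟨Real.sqrt (β * y), Real.sqrt_pos.2 (by positivity), ?_⟩
    simp only
    rw [Real.sq_sqrt (by positivity), mul_comm, mul_div_assoc, div_self hβ.ne', mul_one]

theorem sq_deriv (β : ℝ) : ∀ t ∈ Ioi (0:ℝ),
    HasDerivWithinAt (fun t : ℝ => t^2/β) (2*t/β) (Ioi 0) t := by
  intro t _
  simpa using (((hasDerivAt_pow 2 t)).div_const β).hasDerivWithinAt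

theorem sq_inj (β : ℝ) (hβ : 0 < β) : InjOn (fun t : ℝ => t^2/β) (Ioi 0) := by
  intro x hx y hy h
  simp only at h
  have h2 : x^2 = y^2 := by field_simp at h; linarith
  nlinarith [mem_Ioi.mp hx, mem_Ioi.mp hy]

theorem sq_ptwise (a β : ℝ) (hβ : 0 < β) : ∀ t ∈ Ioi (0:ℝ),
    |2*t/β| • ((t^2/β) ^ (a-1) / (1 + t^2/β))
      = (2 * β^(1-a)) * (t ^ (2*a-1) / (t^2+β)) := by
  intro t ht
  have ht0 : (0:ℝ) < t := ht
  have e1 : (t^2/β) ^ (a-1) = t ^ (2*a-2) * (β ^ (a-1))⁻¹ := by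
    rw [Real.div_rpow (sq_nonneg t) hβ.le, ← Real.rpow_natCast t 2, ← Real.rpow_mul ht0.le,
      div_eq_mul_inv, show ((2:ℕ):ℝ)*(a-1) = 2*a-2 by push_cast; ring]
  have e2 : (β ^ (a-1))⁻¹ = β^(1-a) := by
    rw [← Real.rpow_neg hβ.le, show -(a-1) = 1-a by ring]
  have e3 : t ^ (2*a-1) = t ^ (2*a-2) * t := by
    rw [show (2*a-1 : ℝ) = (2*a-2)+1 by ring, Real.rpow_add ht0, Real.rpow_one]
  rw [e1, e2, e3, smul_eq_mul, abs_of_pos (by positivity)]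
  have h1 : 1 + t^2/β = (t^2+β)/β := by field_simp; ring
  rw [h1]
  have hne : t^2 + β ≠ 0 := by positivity
  field_simp

theorem halfline_val (a β : ℝ) (ha0 : 0 < a) (ha1 : a < 1) (hβ : 0 < β) :
    ∫ t in Ioi (0:ℝ), t ^ (2*a-1) / (t^2+β) = β^(a-1) / 2 * (π / Real.sin (π * a)) := by
  have h := mellin_val a ha0 ha1
  rw [← sq_data β hβ, integral_image_eq_integral_abs_deriv_smul measurableSet_Ioi (sq_deriv β)
    (sq_inj β hβ) (fun x => x ^ (a-1) / (1 + x)),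
    setIntegral_congr_fun measurableSet_Ioi (sq_ptwise a β hβ), integral_const_mul] at h
  have hb : (0:ℝ) < β ^ (1-a) := Real.rpow_pos_of_pos hβ _
  have e : β ^ (a-1) = (β ^ (1-a))⁻¹ := by
    rw [← Real.rpow_neg hβ.le, show -(1-a) = a-1 by ring]
  calc ∫ t in Ioi (0:ℝ), t ^ (2*a-1) / (t^2+β)
      = (2 * β^(1-a))⁻¹ * (2 * β^(1-a) * ∫ t in Ioi (0:ℝ), t ^ (2*a-1) / (t^2+β)) := by
        field_simp
    _ = (2 * β^(1-a))⁻¹ * (π / Real.sin (π * a)) := by rw [h]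
    _ = β^(a-1) / 2 * (π / Real.sin (π * a)) := by rw [e, mul_inv]; ring

theorem halfline_integrable (a β : ℝ) (ha0 : 0 < a) (ha1 : a < 1) (hβ : 0 < β) :
    IntegrableOn (fun t : ℝ => t ^ (2*a-1) / (t^2+β)) (Ioi (0:ℝ)) := by
  have h := mellin_integrable a ha0 ha1
  rw [← sq_data β hβ, integrableOn_image_iff_integrableOn_abs_deriv_smul measurableSet_Ioi
    (sq_deriv β) (sq_inj β hβ)] at h
  have h2 := h.congr_fun (sq_ptwise a β hβ) measurableSet_Ioi
  have hb : (2 * β ^ (1-a)) ≠ 0 := by positivity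
  have h3 : IntegrableOn (fun x : ℝ => (2 * β ^ (1-a))⁻¹ * ((2 * β^(1-a)) * (x ^ (2*a-1) / (x^2+β)))) (Ioi 0) :=
    h2.const_mul (2 * β ^ (1-a))⁻¹
  refine h3.congr_fun (fun t _ => ?_) measurableSet_Ioi
  field_simp

theorem fullline_val (a β : ℝ) (ha0 : 0 < a) (ha1 : a < 1) (hβ : 0 < β) :
    ∫ ϑ : ℝ, |ϑ| ^ (2*a-1) / (ϑ^2+β) = π / Real.sin (π * a) * β^(a-1) := by
  have e : ∀ ϑ : ℝ, |ϑ| ^ (2*a-1) / (ϑ^2+β) = (fun t : ℝ => t ^ (2*a-1) / (t^2+β)) |ϑ| := by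
    intro ϑ; simp [sq_abs]
  rw [show (fun ϑ : ℝ => |ϑ| ^ (2*a-1) / (ϑ^2+β)) = fun ϑ => (fun t : ℝ => t ^ (2*a-1) / (t^2+β)) |ϑ| from funext e,
    integral_comp_abs (f := fun t : ℝ => t ^ (2*a-1) / (t^2+β)), halfline_val a β ha0 ha1 hβ]
  ring

theorem fullline_integrable (a β : ℝ) (ha0 : 0 < a) (ha1 : a < 1) (hβ : 0 < β) :
    Integrable (fun ϑ : ℝ => |ϑ| ^ (2*a-1) / (ϑ^2+β)) := by
  have hIoi : IntegrableOn (fun ϑ : ℝ => |ϑ| ^ (2*a-1) / (ϑ^2+β)) (Ioi 0) := by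
    refine (halfline_integrable a β ha0 ha1 hβ).congr_fun (fun t ht => ?_) measurableSet_Ioi
    rw [abs_of_pos ht]
  have hIic : IntegrableOn (fun ϑ : ℝ => |ϑ| ^ (2*a-1) / (ϑ^2+β)) (Iic 0) := by
    rw [← Measure.map_neg_eq_self (volume : Measure ℝ)]
    have m : MeasurableEmbedding fun x : ℝ => -x := (Homeomorph.neg ℝ).measurableEmbedding
    rw [m.integrableOn_map_iff]
    simp_rw [Function.comp_def, abs_neg, neg_sq, neg_preimage, neg_Iic, neg_zero]
    exact Iff.mpr integrableOn_Ici_iff_integrableOn_Ioi hIoi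
  have := hIic.union hIoi
  rwa [Iic_union_Ioi, integrableOn_univ] at this

end Aux

section Main
open Set Filter

/-- Weighted Cauchy–Schwarz estimate used in Lemma 4.4 and Theorem 6.2 of the
paper: `(∫ |φ(ϑ)| |ϑ|^{α-1/2} dϑ)² ≤ (π/sin(απ)) β^{α-1} ∫ (ϑ²+β) φ(ϑ)² dϑ`. -/
theorem stmt_6 (α β : ℝ) (hα0 : 0 < α) (hα1 : α < 1) (hβ : 0 < β)
    (φ : ℝ → ℝ) (hmeas : Measurable φ)
    (hint : Integrable (fun ϑ : ℝ => (ϑ ^ 2 + β) * (φ ϑ) ^ 2)) :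
    (∫ ϑ : ℝ, |φ ϑ| * |ϑ| ^ (α - 1/2)) ^ 2
      ≤ (π / Real.sin (α * π)) * β ^ (α - 1) *
          ∫ ϑ : ℝ, (ϑ ^ 2 + β) * (φ ϑ) ^ 2 := by
  set F : ℝ → ℝ := fun ϑ => Real.sqrt (ϑ^2+β) * |φ ϑ| with hF
  set G : ℝ → ℝ := fun ϑ => |ϑ| ^ (α-1/2) / Real.sqrt (ϑ^2+β) with hG
  have hsq : ∀ x : ℝ, 0 ≤ x → x ^ (2:ℝ) = x ^ 2 := fun x hx => by
    rw [show (2:ℝ) = ((2:ℕ):ℝ) by norm_num, Real.rpow_natCast]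
  have hsqrtpos : ∀ ϑ : ℝ, 0 < Real.sqrt (ϑ^2+β) := fun ϑ => Real.sqrt_pos.2 (by positivity)
  have hFnn : ∀ ϑ, 0 ≤ F ϑ := fun ϑ => mul_nonneg (Real.sqrt_nonneg _) (abs_nonneg _)
  have hGnn : ∀ ϑ, 0 ≤ G ϑ := fun ϑ =>
    div_nonneg (Real.rpow_nonneg (abs_nonneg _) _) (Real.sqrt_nonneg _)
  have hFG : ∀ ϑ, |φ ϑ| * |ϑ| ^ (α-1/2) = F ϑ * G ϑ := by
    intro ϑ
    have h := (hsqrtpos ϑ).ne'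
    simp only [hF, hG]
    field_simp
  have hF2 : ∀ ϑ, F ϑ ^ 2 = (ϑ^2+β) * (φ ϑ)^2 := by
    intro ϑ
    simp only [hF]
    rw [mul_pow, Real.sq_sqrt (by positivity), sq_abs]
  have hG2 : ∀ ϑ, G ϑ ^ 2 = |ϑ| ^ (2*α-1) / (ϑ^2+β) := by
    intro ϑ
    simp only [hG]
    rw [div_pow, Real.sq_sqrt (by positivity), ← Real.rpow_natCast (|ϑ| ^ (α-1/2)) 2,
      ← Real.rpow_mul (abs_nonneg ϑ), show (α-1/2)*((2:ℕ):ℝ) = 2*α-1 by push_cast; ring]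
  have hFmeas : AEStronglyMeasurable F volume :=
    ((((measurable_id.pow_const 2).add_const β).sqrt).mul hmeas.abs).aestronglyMeasurable
  have hGmeas : AEStronglyMeasurable G volume :=
    ((measurable_abs.pow_const (α-1/2)).div
      (((measurable_id.pow_const 2).add_const β).sqrt)).aestronglyMeasurable
  have hMemF : MemLp F (ENNReal.ofReal 2) volume := by
    rw [show ENNReal.ofReal 2 = 2 by norm_num [ENNReal.ofReal_ofNat]]
    exact (memLp_two_iff_integrable_sq hFmeas).2 ((hint.congr (Filter.Eventually.of_forall
      (fun ϑ => (hF2 ϑ).symm))))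
  have hMemG : MemLp G (ENNReal.ofReal 2) volume := by
    rw [show ENNReal.ofReal 2 = 2 by norm_num [ENNReal.ofReal_ofNat]]
    exact (memLp_two_iff_integrable_sq hGmeas).2 (((fullline_integrable α β hα0 hα1 hβ).congr
      (Filter.Eventually.of_forall (fun ϑ => (hG2 ϑ).symm))))
  have hpq : Real.HolderConjugate 2 2 := Real.HolderConjugate.two_two
  have h := integral_mul_le_Lp_mul_Lq_of_nonneg hpq (Filter.Eventually.of_forall hFnn)
    (Filter.Eventually.of_forall hGnn) hMemF hMemG
  have hA : ∫ ϑ : ℝ, F ϑ ^ (2:ℝ) = ∫ ϑ : ℝ, (ϑ^2+β) * (φ ϑ)^2 :=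
    integral_congr_ae (Filter.Eventually.of_forall (fun ϑ => by show F ϑ ^ (2:ℝ) = _; rw [hsq _ (hFnn ϑ), hF2 ϑ]))
  have hB : ∫ ϑ : ℝ, G ϑ ^ (2:ℝ) = π / Real.sin (π * α) * β^(α-1) := by
    rw [integral_congr_ae (Filter.Eventually.of_forall (fun ϑ => by show G ϑ ^ (2:ℝ) = _; rw [hsq _ (hGnn ϑ), hG2 ϑ]))]
    exact fullline_val α β hα0 hα1 hβ
  rw [hA, hB] at h
  have hL : ∫ ϑ : ℝ, |φ ϑ| * |ϑ| ^ (α-1/2) = ∫ ϑ : ℝ, F ϑ * G ϑ :=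
    integral_congr_ae (Filter.Eventually.of_forall (fun ϑ => hFG ϑ))
  have hLnn : 0 ≤ ∫ ϑ : ℝ, F ϑ * G ϑ :=
    integral_nonneg (fun ϑ => mul_nonneg (hFnn ϑ) (hGnn ϑ))
  have hAnn : 0 ≤ ∫ ϑ : ℝ, (ϑ^2+β) * (φ ϑ)^2 :=
    integral_nonneg (fun ϑ => mul_nonneg (by positivity) (sq_nonneg _))
  have hMnn : 0 ≤ π / Real.sin (π * α) * β^(α-1) := by
    rw [← fullline_val α β hα0 hα1 hβ]
    exact integral_nonneg (fun ϑ => div_nonneg (Real.rpow_nonneg (abs_nonneg _) _) (by positivity))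
  have h2 := pow_le_pow_left₀ hLnn h 2
  rw [mul_pow, ← Real.rpow_natCast ((∫ ϑ : ℝ, (ϑ^2+β) * (φ ϑ)^2) ^ ((1:ℝ)/2)) 2,
    ← Real.rpow_natCast ((π / Real.sin (π * α) * β^(α-1)) ^ ((1:ℝ)/2)) 2,
    ← Real.rpow_mul hAnn, ← Real.rpow_mul hMnn] at h2
  norm_num at h2
  rw [hL]
  calc (∫ ϑ : ℝ, F ϑ * G ϑ) ^ 2
      ≤ (∫ ϑ : ℝ, (ϑ^2+β) * (φ ϑ)^2) * (π / Real.sin (π * α) * β^(α-1)) := h2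
    _ = (π / Real.sin (α * π)) * β ^ (α - 1) * ∫ ϑ : ℝ, (ϑ^2+β) * (φ ϑ)^2 := by
        rw [mul_comm π α]; ring

end Main
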